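/- Let ρ > 1, α > 0, and n ≥ 2 an integer. For β ∈ Γ_ρ^{(n)} := [1/(1+(n−1)ρ), 1/n], define i_β := ⌊(1 − nβ)/((ρ−1)β)⌋ and let Q_β be the probability mass function on {1,…,n} with Q_β(j) = ρβ for j ∈ {1,…,i_β}, Q_β(i_β+1) = 1 − (n + i_β·ρ − i_β − 1)β, and Q_β(j) = β for j ∈ {i_β+2,…,n}. Then Q_β ∈ P_n(ρ), and min over P ∈ P_n(ρ) of H_α(P) equals min over β ∈ Γ_ρ^{(n)} of H_α(Q_β). -/

import Mathlib

open Finset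

/-- `P` is a probability mass function, strictly positive on `{1,…,n}`. -/
def IsPMF (n : ℕ) (P : ℕ → ℝ) : Prop :=
  (∀ i ∈ Finset.Icc 1 n, 0 < P i) ∧ ∑ i ∈ Finset.Icc 1 n, P i = 1

/-- The ratio of the maximal to minimal mass of `P` on `{1,…,n}` is at most `ρ`. -/
def RatioBdd (n : ℕ) (ρ : ℝ) (P : ℕ → ℝ) : Prop :=
  ∀ i ∈ Finset.Icc 1 n, ∀ j ∈ Finset.Icc 1 n, P i ≤ ρ * P j

/-- `P` is nonincreasing on `{1,…,n}`. -/
def DecOn (n : ℕ) (P : ℕ → ℝ) : Prop :=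
  ∀ i ∈ Finset.Icc 1 n, ∀ j ∈ Finset.Icc 1 n, i ≤ j → P j ≤ P i

/-- Sum of the `k` largest masses of `P` on `{1,…,n}`. -/
noncomputable def topSum (n : ℕ) (P : ℕ → ℝ) (k : ℕ) : ℝ :=
  sSup ((fun s : Finset ℕ => ∑ i ∈ s, P i) '' {s | s ⊆ Finset.Icc 1 n ∧ s.card = k})

/-- `P ≺ Q`: `P` is majorized by `Q`, both viewed on `{1,…,n}`. -/
def MajorizedBy (n : ℕ) (P Q : ℕ → ℝ) : Prop :=
  ∀ k, 1 ≤ k → k ≤ n - 1 → topSum n P k ≤ topSum n Q k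

/-- Zero-padding of a pmf on `{1,…,m}` outside of `{1,…,m}`. -/
def padTo (m : ℕ) (Q : ℕ → ℝ) : ℕ → ℝ := fun i => if i ≤ m then Q i else 0

/-- Rényi entropy of order `α` of `P` on `{1,…,n}` (Shannon entropy for `α = 1`);
natural logarithms. -/
noncomputable def renyiH (n : ℕ) (α : ℝ) (P : ℕ → ℝ) : ℝ :=
  if α = 1 then -∑ i ∈ Finset.Icc 1 n, P i * Real.log (P i)
  else (1 - α)⁻¹ * Real.log (∑ i ∈ Finset.Icc 1 n, P i ^ α)

/-- `c_α^{(n)}(ρ) = log n − min_{P ∈ 𝒫_n(ρ)} H_α(P)` for `n ≥ 2`, and `0` for `n ≤ 1`. -/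
noncomputable def cN (α ρ : ℝ) (n : ℕ) : ℝ :=
  if n ≤ 1 then 0
  else Real.log n - sInf (renyiH n α '' {P | IsPMF n P ∧ RatioBdd n ρ P})

/-- The closed-form expression for `c_α^{(∞)}(ρ)`, `α ∈ (0,1) ∪ (1,∞)`. -/
noncomputable def cInfinity (α ρ : ℝ) : ℝ :=
  (α - 1)⁻¹ * Real.log (1 + (1 + α * (ρ - 1) - ρ ^ α) / ((1 - α) * (ρ - 1)))
    - α / (α - 1) * Real.log (1 + (1 + α * (ρ - 1) - ρ ^ α) / ((1 - α) * (ρ ^ α - 1)))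

/-- `v(α) := c_α^{(∞)}(2)`, with the continuous extension at `α = 1`. -/
noncomputable def vFun (α : ℝ) : ℝ :=
  if α = 1 then Real.log (2 / (Real.exp 1 * Real.log 2))
  else Real.log ((α - 1) / ((2 : ℝ) ^ α - 2)) - α / (α - 1) * Real.log (α / ((2 : ℝ) ^ α - 1))

/-- `n*`: the maximal `i ∈ {1,…,m−1}` with `P i ≥ (m−i)⁻¹ ∑_{j=i+1}^n P j`. -/
noncomputable def nStar (n m : ℕ) (P : ℕ → ℝ) : ℕ :=
  sSup {i : ℕ | 1 ≤ i ∧ i ≤ m - 1 ∧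
    ((m : ℝ) - (i : ℝ))⁻¹ * ∑ j ∈ Finset.Icc (i + 1) n, P j ≤ P i}

/-- The pmf of `X̃_m` on `{1,…,m}`, built from a nonincreasing pmf `P` on `{1,…,n}`. -/
noncomputable def tildeX (n m : ℕ) (P : ℕ → ℝ) : ℕ → ℝ := fun i =>
  if P 1 < 1 / (m : ℝ) then 1 / (m : ℝ)
  else if i ≤ nStar n m P then P i
  else ((m : ℝ) - (nStar n m P : ℝ))⁻¹ * ∑ j ∈ Finset.Icc (nStar n m P + 1) n, P j

/-- The pmf of `Ỹ_m` on `{1,…,m}`. -/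
def tildeY (n m : ℕ) (P : ℕ → ℝ) : ℕ → ℝ := fun i =>
  if i = 1 then ∑ j ∈ Finset.Icc 1 (n - m + 1), P j else P (n - m + i)

/-- The pmf of `f(X)`: `(push n f P) j = ∑_{i ∈ {1,…,n}, f i = j} P i`. -/
def push (n : ℕ) (f : ℕ → ℕ) (P : ℕ → ℝ) : ℕ → ℝ := fun j =>
  ∑ i ∈ (Finset.Icc 1 n).filter (fun i => f i = j), P i

/-- The set `{1,…,n}^k` of source sequences of length `k`. -/
def seqSet (n k : ℕ) : Finset (Fin k → ℕ) := Fintype.piFinset fun _ => Finset.Icc 1 n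

/-- Product (i.i.d.) probability of a sequence. -/
def prodP (k : ℕ) (P : ℕ → ℝ) (x : Fin k → ℕ) : ℝ := ∏ i, P (x i)

/-- `g` is a ranking function for the i.i.d. vector on `{1,…,n}^k` with marginal `P`:
a bijection onto `{1,…,n^k}` which assigns smaller ranks to larger masses. -/
def IsRanking (n k : ℕ) (P : ℕ → ℝ) (g : (Fin k → ℕ) → ℕ) : Prop :=
  Set.BijOn g (↑(seqSet n k)) (Set.Icc 1 (n ^ k)) ∧
    ∀ x ∈ seqSet n k, ∀ y ∈ seqSet n k, prodP k P y < prodP k P x → g x < g y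

/-- The `ρ`-th guessing moment `E[g(Z^k)^ρ]`. -/
noncomputable def gmoment (n k : ℕ) (P : ℕ → ℝ) (g : (Fin k → ℕ) → ℕ) (ρ : ℝ) : ℝ :=
  ∑ x ∈ seqSet n k, prodP k P x * (g x : ℝ) ^ ρ

/-- Kraft inequality for a `D`-ary length function on `{1,…,n}^k`. -/
def Kraft (n k D : ℕ) (ℓ : (Fin k → ℕ) → ℕ) : Prop :=
  ∑ x ∈ seqSet n k, (D : ℝ) ^ (-(ℓ x : ℝ)) ≤ 1

/-- Scaled cumulant generating function `Λ_k(ρ)` of the codeword lengths (base-`D` log). -/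
noncomputable def cgf (n k D : ℕ) (P : ℕ → ℝ) (ℓ : (Fin k → ℕ) → ℕ) (ρ : ℝ) : ℝ :=
  (1 / (k : ℝ)) * Real.logb D (∑ x ∈ seqSet n k, prodP k P x * (D : ℝ) ^ (ρ * (ℓ x : ℝ)))

/-- `i_β` of Lemma 2. -/
noncomputable def iBeta (n : ℕ) (ρ β : ℝ) : ℕ := Nat.floor ((1 - (n : ℝ) * β) / ((ρ - 1) * β))

/-- The pmf `Q_β` of Lemma 2. -/
noncomputable def Qbeta (n : ℕ) (ρ β : ℝ) : ℕ → ℝ := fun j =>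
  if j ≤ iBeta n ρ β then ρ * β
  else if j = iBeta n ρ β + 1 then
    1 - ((n : ℝ) + (iBeta n ρ β : ℝ) * ρ - (iBeta n ρ β : ℝ) - 1) * β
  else β


section Aux


lemma concave_chord {s : Set ℝ} {f : ℝ → ℝ} (hf : ConcaveOn ℝ s f)
    {x y z : ℝ} (hx : x ∈ s) (hz : z ∈ s) (hxy : x ≤ y) (hyz : y ≤ z) (hxz : x < z) :
    ((z - y) / (z - x)) * f x + ((y - x) / (z - x)) * f z ≤ f y := by
  have hzx : (0:ℝ) < z - x := by linarith
  have ha : (0:ℝ) ≤ (z - y) / (z - x) := div_nonneg (by linarith) hzx.le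
  have hb : (0:ℝ) ≤ (y - x) / (z - x) := div_nonneg (by linarith) hzx.le
  have hab : (z - y) / (z - x) + (y - x) / (z - x) = 1 := by field_simp; ring
  have h := hf.2 hx hz ha hb hab
  have hy : ((z - y) / (z - x)) • x + ((y - x) / (z - x)) • z = y := by
    simp only [smul_eq_mul]; field_simp; ring
  rw [hy] at h
  simpa [smul_eq_mul] using h

/-- Multiplied-out version of the chord inequality. -/
lemma concave_chord' {s : Set ℝ} {f : ℝ → ℝ} (hf : ConcaveOn ℝ s f)
    {x y z : ℝ} (hx : x ∈ s) (hz : z ∈ s) (hxy : x ≤ y) (hyz : y ≤ z) (hxz : x < z) :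
    (z - y) * f x + (y - x) * f z ≤ (z - x) * f y := by
  have hzx : (0:ℝ) < z - x := by linarith
  have h := concave_chord hf hx hz hxy hyz hxz
  have h2 := mul_le_mul_of_nonneg_left h hzx.le
  have h3 : (z - x) * (((z - y) / (z - x)) * f x + ((y - x) / (z - x)) * f z)
      = (z - y) * f x + (y - x) * f z := by
    field_simp
  linarith [h2, h3.symm.le, h3.le]

lemma count_min (n k : ℕ) (d M : ℝ) (u : ℕ → ℝ)
    (hd : 0 ≤ d) (hdM : d ≤ M)
    (hu : ∀ i ∈ Finset.Icc 1 n, 0 ≤ u i ∧ u i ≤ M)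
    (hsum : ∑ i ∈ Finset.Icc 1 n, u i = k * M + d) :
    ((k : ℝ) + 1) * d ≤ ∑ i ∈ Finset.Icc 1 n, min (u i) d := by
  classical
  set s := Finset.Icc 1 n with hs
  set A := s.filter (fun i => d ≤ u i) with hA
  have hsplit : ∑ i ∈ s, min (u i) d
      = A.card * d + ∑ i ∈ s.filter (fun i => ¬ d ≤ u i), u i := by
    rw [← Finset.sum_filter_add_sum_filter_not s (fun i => d ≤ u i)]
    congr 1
    · rw [Finset.sum_congr rfl (fun i hi => min_eq_right (Finset.mem_filter.mp hi).2),
        Finset.sum_const, nsmul_eq_mul]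
    · exact Finset.sum_congr rfl (fun i hi => min_eq_left
        (le_of_lt (lt_of_not_ge (Finset.mem_filter.mp hi).2)))
  have hAsub : A ⊆ s := Finset.filter_subset _ _
  rcases le_or_gt (k + 1) A.card with hcard | hcard
  · have h1 : ((k:ℝ) + 1) * d ≤ (A.card : ℝ) * d := by
      apply mul_le_mul_of_nonneg_right _ hd
      exact_mod_cast hcard
    have h2 : (0:ℝ) ≤ ∑ i ∈ s.filter (fun i => ¬ d ≤ u i), u i :=
      Finset.sum_nonneg (fun i hi => (hu i (Finset.mem_filter.mp hi).1).1)
    linarith [hsplit]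
  · have hak : A.card ≤ k := Nat.lt_succ_iff.mp hcard
    have hA_le : ∑ i ∈ A, u i ≤ (A.card : ℝ) * M := by
      calc ∑ i ∈ A, u i ≤ ∑ i ∈ A, M :=
            Finset.sum_le_sum (fun i hi => (hu i (hAsub hi)).2)
        _ = (A.card : ℝ) * M := by rw [Finset.sum_const, nsmul_eq_mul]
    have hEq : ∑ i ∈ s.filter (fun i => ¬ d ≤ u i), u i = (k * M + d) - ∑ i ∈ A, u i := by
      have := Finset.sum_filter_add_sum_filter_not s (fun i => d ≤ u i) u
      rw [← hA] at this
      linarith [this, hsum]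
    have hak' : (A.card : ℝ) ≤ (k : ℝ) := by exact_mod_cast hak
    have hfact : (0:ℝ) ≤ ((k:ℝ) - A.card) * (M - d) :=
      mul_nonneg (by linarith) (by linarith)
    nlinarith [hsplit]

/-- Key lemma: lower bound on `∑ f(P i)` by the extremal configuration, for concave `f`. -/
lemma key_concave (n k : ℕ) (β M qs : ℝ) (f : ℝ → ℝ)
    (hβ : 0 < β) (hM : 0 < M)
    (hq1 : β ≤ qs) (hq2 : qs < β + M)
    (hf : ConcaveOn ℝ (Set.Icc β (β + M)) f)
    (P : ℕ → ℝ)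
    (hP : ∀ i ∈ Finset.Icc 1 n, P i ∈ Set.Icc β (β + M))
    (hsum : ∑ i ∈ Finset.Icc 1 n, P i = k * (β + M) + qs + ((n:ℝ) - 1 - k) * β) :
    (k:ℝ) * f (β + M) + f qs + ((n:ℝ) - 1 - k) * f β ≤ ∑ i ∈ Finset.Icc 1 n, f (P i) := by
  classical
  obtain ⟨d, rfl⟩ : ∃ d, qs = β + d := ⟨qs - β, by ring⟩
  have hd0 : 0 ≤ d := by linarith
  have hdM : d < M := by linarith
  have hmemβ : β ∈ Set.Icc β (β + M) := ⟨le_refl β, by linarith⟩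
  have hmemtop : β + M ∈ Set.Icc β (β + M) := ⟨by linarith, le_refl _⟩
  have hmemqs : β + d ∈ Set.Icc β (β + M) := ⟨by linarith, by linarith⟩
  have hcardIcc : ((Finset.Icc 1 n).card : ℝ) = n := by
    rw [Nat.card_Icc]; push_cast; ring
  have hS : ∑ i ∈ Finset.Icc 1 n, (P i - β) = k * M + d := by
    rw [Finset.sum_sub_distrib, Finset.sum_const, nsmul_eq_mul, hcardIcc]
    linear_combination hsum
  rcases eq_or_lt_of_le hd0 with hde | hdpos
  · -- degenerate case d = 0
    subst hde
    have hpt : ∀ i ∈ Finset.Icc 1 n,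
        (β + M - P i) * f β + (P i - β) * f (β + M) ≤ M * f (P i) := by
      intro i hi
      have hx := hP i hi
      have h := concave_chord' hf hmemβ hmemtop hx.1 hx.2 (by linarith)
      have he : β + M - β = M := by ring
      rw [he] at h
      exact h
    have hsum2 := Finset.sum_le_sum hpt
    have hL : ∑ i ∈ Finset.Icc 1 n, ((β + M - P i) * f β + (P i - β) * f (β + M))
        = ((n:ℝ) - k) * M * f β + (k:ℝ) * M * f (β + M) := by
      rw [Finset.sum_add_distrib, ← Finset.sum_mul, ← Finset.sum_mul]
      have h1 : ∑ i ∈ Finset.Icc 1 n, (β + M - P i) = ((n:ℝ) - k) * M := by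
        rw [Finset.sum_sub_distrib, Finset.sum_const, nsmul_eq_mul, hcardIcc]
        linear_combination -hsum
      rw [h1, hS]
      ring
    have hR : ∑ i ∈ Finset.Icc 1 n, M * f (P i) = M * ∑ i ∈ Finset.Icc 1 n, f (P i) :=
      (Finset.mul_sum _ _ _).symm
    rw [hL, hR] at hsum2
    have hgoal : M * ((k:ℝ) * f (β + M) + f (β + 0) + ((n:ℝ) - 1 - k) * f β)
        ≤ M * ∑ i ∈ Finset.Icc 1 n, f (P i) := by
      have : β + 0 = β := by ring
      rw [this]
      nlinarith [hsum2]
    exact le_of_mul_le_mul_left hgoal hM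
  · -- main case 0 < d
    have hMd : (0:ℝ) < M - d := by linarith
    obtain ⟨c, hc⟩ : ∃ c, c * (M - d) = f (β + M) - f (β + d) :=
      ⟨(f (β + M) - f (β + d)) / (M - d), div_mul_cancel₀ _ hMd.ne'⟩
    -- Step A : 0 ≤ gq
    have hchA := concave_chord' hf hmemβ hmemtop (by linarith : β ≤ β + d)
      (by linarith : β + d ≤ β + M) (by linarith)
    -- hchA : (β+M-(β+d)) * f β + (β+d-β) * f (β+M) ≤ (β+M-β) * f (β+d)
    have hgq0 : 0 ≤ f (β + d) - f β - c * d := by nlinarith [hchA, hc]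
    -- Step B : pointwise
    have hpt : ∀ i ∈ Finset.Icc 1 n,
        min (P i - β) d * (f (β + d) - f β - c * d)
          ≤ d * (f (P i) - f β - c * (P i - β)) := by
      intro i hi
      obtain ⟨hx1, hx2⟩ := hP i hi
      rcases le_or_gt (P i) (β + d) with hle | hgt
      · have hmin : min (P i - β) d = P i - β := min_eq_left (by linarith)
        rw [hmin]
        have hch := concave_chord' hf hmemβ hmemqs hx1 hle (by linarith : β < β + d)
        -- hch : (β+d - P i) * f β + (P i - β) * f (β+d) ≤ (β+d-β) * f (P i)
        nlinarith [hch]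
      · have hmin : min (P i - β) d = d := min_eq_right (by linarith)
        rw [hmin]
        have hch := concave_chord' hf hmemqs hmemtop hgt.le hx2 (by linarith : β + d < β + M)
        -- hch : (β+M - P i) * f (β+d) + (P i - (β+d)) * f (β+M) ≤ (β+M-(β+d)) * f (P i)
        -- combine with hc : c*(M-d) = f(β+M) - f(β+d)
        have h2 : (P i - (β + d)) * (c * (M - d)) = (P i - (β + d)) * (f (β + M) - f (β + d)) := by
          rw [hc]
        have hkey : c * (P i - (β + d)) * (M - d) ≤ (f (P i) - f (β + d)) * (M - d) := by
          nlinarith [hch, h2]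
        have hkey2 : c * (P i - (β + d)) ≤ f (P i) - f (β + d) :=
          le_of_mul_le_mul_right hkey hMd
        nlinarith [hkey2, hd0]
    -- Step C : sum up
    have hsum3 := Finset.sum_le_sum hpt
    have hcm := count_min n k d M (fun i => P i - β) hd0 hdM.le
      (fun i hi => ⟨by show (0:ℝ) ≤ P i - β; linarith [(hP i hi).1],
        by show P i - β ≤ M; linarith [(hP i hi).2]⟩) (by simpa using hS)
    have hL : ((k:ℝ) + 1) * d * (f (β + d) - f β - c * d)
        ≤ ∑ i ∈ Finset.Icc 1 n, min (P i - β) d * (f (β + d) - f β - c * d) := by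
      rw [← Finset.sum_mul]
      have := mul_le_mul_of_nonneg_right hcm hgq0
      linarith
    have hR : ∑ i ∈ Finset.Icc 1 n, d * (f (P i) - f β - c * (P i - β))
        = d * (∑ i ∈ Finset.Icc 1 n, f (P i) - (n:ℝ) * f β - c * (k * M + d)) := by
      rw [← Finset.mul_sum]
      congr 1
      rw [Finset.sum_sub_distrib, Finset.sum_sub_distrib, Finset.sum_const,
        nsmul_eq_mul, hcardIcc, ← Finset.mul_sum, hS]
    have hmain : ((k:ℝ) + 1) * (f (β + d) - f β - c * d)
        ≤ ∑ i ∈ Finset.Icc 1 n, f (P i) - (n:ℝ) * f β - c * (k * M + d) := by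
      have h1 : d * (((k:ℝ) + 1) * (f (β + d) - f β - c * d))
          ≤ d * (∑ i ∈ Finset.Icc 1 n, f (P i) - (n:ℝ) * f β - c * (k * M + d)) := by
        rw [← hR]
        calc d * (((k:ℝ) + 1) * (f (β + d) - f β - c * d))
            = ((k:ℝ) + 1) * d * (f (β + d) - f β - c * d) := by ring
          _ ≤ _ := le_trans hL hsum3
      exact le_of_mul_le_mul_left h1 hdpos
    -- Step D : final assembly
    have hkc : (k:ℝ) * (c * (M - d)) = (k:ℝ) * (f (β + M) - f (β + d)) := by rw [hc]
    linarith [hmain, hkc]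

lemma sum_Q (n : ℕ) (ρ β : ℝ) (hkn : iBeta n ρ β + 1 ≤ n) (φ : ℝ → ℝ) :
    ∑ j ∈ Finset.Icc 1 n, φ (Qbeta n ρ β j)
      = (iBeta n ρ β : ℝ) * φ (ρ * β)
        + φ (1 - ((n : ℝ) + (iBeta n ρ β : ℝ) * ρ - (iBeta n ρ β : ℝ) - 1) * β)
        + ((n : ℝ) - 1 - (iBeta n ρ β : ℝ)) * φ β := by
  classical
  set k := iBeta n ρ β with hk
  have hIcc : Finset.Icc 1 n = Finset.Ioc 0 n := by
    rw [← Finset.Icc_add_one_left_eq_Ioc]; rfl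
  have hsplit1 := Finset.sum_Ioc_consecutive (fun j => φ (Qbeta n ρ β j))
    (Nat.zero_le k) (le_trans (Nat.le_succ k) hkn)
  have hsplit2 := Finset.sum_Ioc_consecutive (fun j => φ (Qbeta n ρ β j))
    (Nat.le_succ k) hkn
  have h1 : ∑ j ∈ Finset.Ioc 0 k, φ (Qbeta n ρ β j) = (k : ℝ) * φ (ρ * β) := by
    rw [Finset.sum_congr rfl (fun j hj => by
      have hjk : j ≤ k := (Finset.mem_Ioc.mp hj).2
      rw [Qbeta, if_pos hjk]), Finset.sum_const, nsmul_eq_mul, Nat.card_Ioc, Nat.sub_zero]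
  have h2 : ∑ j ∈ Finset.Ioc k (k+1), φ (Qbeta n ρ β j)
      = φ (1 - ((n : ℝ) + (k : ℝ) * ρ - (k : ℝ) - 1) * β) := by
    rw [Nat.Ioc_succ_singleton, Finset.sum_singleton, Qbeta, if_neg (by omega), if_pos rfl]
  have h3 : ∑ j ∈ Finset.Ioc (k+1) n, φ (Qbeta n ρ β j)
      = ((n : ℝ) - 1 - (k : ℝ)) * φ β := by
    rw [Finset.sum_congr rfl (fun j hj => by
      have hjk : k + 1 < j := (Finset.mem_Ioc.mp hj).1
      rw [Qbeta, if_neg (by omega), if_neg (by omega)]),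
      Finset.sum_const, nsmul_eq_mul, Nat.card_Ioc]
    congr 1
    have : (k + 1) ≤ n := hkn
    push_cast [Nat.cast_sub this]
    ring
  rw [hIcc, ← hsplit1, ← hsplit2, h1, h2, h3]
  ring

lemma Qbeta_facts (n : ℕ) (hn : 2 ≤ n) (ρ β : ℝ) (hρ : 1 < ρ)
    (hβ1 : 1 / (1 + ((n : ℝ) - 1) * ρ) ≤ β) (hβ2 : β ≤ 1 / (n : ℝ)) :
    0 < β ∧ iBeta n ρ β + 1 ≤ n ∧
    β ≤ 1 - ((n : ℝ) + (iBeta n ρ β : ℝ) * ρ - (iBeta n ρ β : ℝ) - 1) * β ∧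
    1 - ((n : ℝ) + (iBeta n ρ β : ℝ) * ρ - (iBeta n ρ β : ℝ) - 1) * β < ρ * β ∧
    (∀ j, β ≤ Qbeta n ρ β j ∧ Qbeta n ρ β j ≤ ρ * β) ∧
    ∑ j ∈ Finset.Icc 1 n, Qbeta n ρ β j = 1 := by
  have hn' : (2:ℝ) ≤ (n:ℝ) := by exact_mod_cast hn
  have hden : (0:ℝ) < 1 + ((n:ℝ) - 1) * ρ := by nlinarith
  have hβpos : 0 < β := lt_of_lt_of_le (by positivity) hβ1
  have hnpos : (0:ℝ) < (n:ℝ) := by linarith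
  have hnβ : (n:ℝ) * β ≤ 1 := by
    have := (le_div_iff₀ hnpos).mp hβ2
    linarith
  have hρβ : (0:ℝ) < (ρ - 1) * β := mul_pos (by linarith) hβpos
  set K : ℝ := (iBeta n ρ β : ℝ) with hK
  have hfl : K ≤ (1 - (n:ℝ) * β) / ((ρ - 1) * β) :=
    Nat.floor_le (div_nonneg (by linarith) hρβ.le)
  have hfl2 : (1 - (n:ℝ) * β) / ((ρ - 1) * β) < K + 1 :=
    Nat.lt_floor_add_one _
  have htmul : (1 - (n:ℝ) * β) / ((ρ - 1) * β) * ((ρ - 1) * β) = 1 - (n:ℝ) * β :=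
    div_mul_cancel₀ _ hρβ.ne'
  have h1le : 1 ≤ β * (1 + ((n:ℝ) - 1) * ρ) := (div_le_iff₀ hden).mp hβ1
  have htn : (1 - (n:ℝ) * β) / ((ρ - 1) * β) ≤ (n:ℝ) - 1 := by
    rw [div_le_iff₀ hρβ]
    nlinarith
  have hkn : iBeta n ρ β + 1 ≤ n := by
    have h : K < (n:ℝ) := lt_of_le_of_lt hfl (lt_of_le_of_lt htn (by linarith))
    rw [hK] at h
    have : iBeta n ρ β < n := by exact_mod_cast h
    omega
  have hqK : (1 - ((n : ℝ) + K * ρ - K - 1) * β) - β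
      = ((1 - (n:ℝ) * β) / ((ρ - 1) * β) - K) * ((ρ - 1) * β) := by
    linear_combination -htmul
  have hq1 : β ≤ 1 - ((n : ℝ) + K * ρ - K - 1) * β := by nlinarith [hqK, hfl, hρβ]
  have hq2 : 1 - ((n : ℝ) + K * ρ - K - 1) * β < ρ * β := by nlinarith [hqK, hfl2, hρβ]
  have hvals : ∀ j, β ≤ Qbeta n ρ β j ∧ Qbeta n ρ β j ≤ ρ * β := by
    intro j
    rw [Qbeta]
    split_ifs with h h'
    · exact ⟨by nlinarith, le_refl _⟩
    · exact ⟨hq1, hq2.le⟩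
    · exact ⟨le_refl _, by nlinarith⟩
  refine ⟨hβpos, hkn, hq1, hq2, hvals, ?_⟩
  have := sum_Q n ρ β hkn (fun x => x)
  rw [this]
  ring

lemma Qbeta_isPMF (n : ℕ) (hn : 2 ≤ n) (ρ β : ℝ) (hρ : 1 < ρ)
    (hβ1 : 1 / (1 + ((n : ℝ) - 1) * ρ) ≤ β) (hβ2 : β ≤ 1 / (n : ℝ)) :
    IsPMF n (Qbeta n ρ β) ∧ RatioBdd n ρ (Qbeta n ρ β) := by
  obtain ⟨hβpos, hkn, hq1, hq2, hvals, hsum⟩ := Qbeta_facts n hn ρ β hρ hβ1 hβ2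
  refine ⟨⟨fun i _ => lt_of_lt_of_le hβpos (hvals i).1, hsum⟩, ?_⟩
  intro i _ j _
  calc Qbeta n ρ β i ≤ ρ * β := (hvals i).2
    _ ≤ ρ * Qbeta n ρ β j := by
        apply mul_le_mul_of_nonneg_left (hvals j).1 (by linarith)

lemma Qbeta_renyi_le (n : ℕ) (hn : 2 ≤ n) (ρ α : ℝ) (hρ : 1 < ρ) (hα : 0 < α)
    (β : ℝ) (hβ1 : 1 / (1 + ((n : ℝ) - 1) * ρ) ≤ β) (hβ2 : β ≤ 1 / (n : ℝ))
    (P : ℕ → ℝ) (hPsum : ∑ i ∈ Finset.Icc 1 n, P i = 1)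
    (hlb : ∀ i ∈ Finset.Icc 1 n, β ≤ P i) (hub : ∀ i ∈ Finset.Icc 1 n, P i ≤ ρ * β) :
    renyiH n α (Qbeta n ρ β) ≤ renyiH n α P := by
  obtain ⟨hβpos, hkn, hq1, hq2, hvals, hQsum1⟩ := Qbeta_facts n hn ρ β hρ hβ1 hβ2
  have hrB : ρ * β = β + (ρ - 1) * β := by ring
  have hM : (0:ℝ) < (ρ - 1) * β := mul_pos (by linarith) hβpos
  have hne : (Finset.Icc 1 n).Nonempty := ⟨1, Finset.mem_Icc.mpr ⟨le_refl 1, by omega⟩⟩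
  have hQid := sum_Q n ρ β hkn (fun x => x)
  have hsumP : ∑ i ∈ Finset.Icc 1 n, P i
      = (iBeta n ρ β : ℝ) * (β + (ρ - 1) * β)
        + (1 - ((n : ℝ) + (iBeta n ρ β : ℝ) * ρ - (iBeta n ρ β : ℝ) - 1) * β)
        + ((n:ℝ) - 1 - (iBeta n ρ β : ℝ)) * β := by
    rw [hPsum, ← hQsum1, hQid]; ring
  have hgen : ∀ f : ℝ → ℝ, ConcaveOn ℝ (Set.Icc β (β + (ρ - 1) * β)) f →
      ∑ j ∈ Finset.Icc 1 n, f (Qbeta n ρ β j) ≤ ∑ i ∈ Finset.Icc 1 n, f (P i) := by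
    intro f hf
    have h1 := key_concave n (iBeta n ρ β) β ((ρ - 1) * β)
      (1 - ((n : ℝ) + (iBeta n ρ β : ℝ) * ρ - (iBeta n ρ β : ℝ) - 1) * β) f
      hβpos hM hq1 (by linarith [hq2]) hf P
      (fun i hi => ⟨hlb i hi, by linarith [hub i hi]⟩) hsumP
    have h2 := sum_Q n ρ β hkn f
    rw [h2, hrB]
    linarith [h1]
  have hsub : Set.Icc β (β + (ρ - 1) * β) ⊆ Set.Ici (0:ℝ) :=
    fun x hx => le_trans hβpos.le hx.1
  have hQpos : ∀ j ∈ Finset.Icc 1 n, 0 < Qbeta n ρ β j :=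
    fun j _ => lt_of_lt_of_le hβpos (hvals j).1
  have hPpos : ∀ i ∈ Finset.Icc 1 n, 0 < P i :=
    fun i hi => lt_of_lt_of_le hβpos (hlb i hi)
  rcases eq_or_ne α 1 with hα1 | hα1
  · -- Shannon case
    subst hα1
    rw [renyiH, renyiH, if_pos rfl, if_pos rfl]
    have hf : ConcaveOn ℝ (Set.Icc β (β + (ρ - 1) * β)) Real.negMulLog :=
      Real.concaveOn_negMulLog.subset hsub (convex_Icc _ _)
    have h := hgen Real.negMulLog hf
    simp only [Real.negMulLog, neg_mul, Finset.sum_neg_distrib] at h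
    linarith
  · rw [renyiH, renyiH, if_neg hα1, if_neg hα1]
    have hQsumpos : 0 < ∑ j ∈ Finset.Icc 1 n, Qbeta n ρ β j ^ α :=
      Finset.sum_pos (fun j hj => Real.rpow_pos_of_pos (hQpos j hj) α) hne
    have hPsumpos : 0 < ∑ i ∈ Finset.Icc 1 n, P i ^ α :=
      Finset.sum_pos (fun i hi => Real.rpow_pos_of_pos (hPpos i hi) α) hne
    rcases lt_or_gt_of_ne hα1 with hlt | hgt
    · -- α < 1
      have hf : ConcaveOn ℝ (Set.Icc β (β + (ρ - 1) * β)) (fun x : ℝ => x ^ α) :=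
        (Real.concaveOn_rpow hα.le hlt.le).subset hsub (convex_Icc _ _)
      have h := hgen _ hf
      have hlog : Real.log (∑ j ∈ Finset.Icc 1 n, Qbeta n ρ β j ^ α)
          ≤ Real.log (∑ i ∈ Finset.Icc 1 n, P i ^ α) :=
        Real.log_le_log hQsumpos h
      apply mul_le_mul_of_nonneg_left hlog
      rw [inv_nonneg]
      linarith
    · -- α > 1
      have hf : ConcaveOn ℝ (Set.Icc β (β + (ρ - 1) * β)) (fun x : ℝ => -(x ^ α)) :=
        ((convexOn_rpow hgt.le).neg).subset hsub (convex_Icc _ _)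
      have h := hgen _ hf
      simp only [Finset.sum_neg_distrib] at h
      have h' : ∑ i ∈ Finset.Icc 1 n, P i ^ α ≤ ∑ j ∈ Finset.Icc 1 n, Qbeta n ρ β j ^ α := by
        linarith
      have hlog : Real.log (∑ i ∈ Finset.Icc 1 n, P i ^ α)
          ≤ Real.log (∑ j ∈ Finset.Icc 1 n, Qbeta n ρ β j ^ α) :=
        Real.log_le_log hPsumpos h'
      apply mul_le_mul_of_nonpos_left hlog
      rw [inv_nonpos]
      linarith

lemma renyi_nonneg (n : ℕ) (hn : 1 ≤ n) (α : ℝ) (hα : 0 < α)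
    (P : ℕ → ℝ) (hP : IsPMF n P) : 0 ≤ renyiH n α P := by
  obtain ⟨hpos, hsum⟩ := hP
  have hne : (Finset.Icc 1 n).Nonempty := ⟨1, Finset.mem_Icc.mpr ⟨le_refl 1, hn⟩⟩
  have hle1 : ∀ i ∈ Finset.Icc 1 n, P i ≤ 1 := by
    intro i hi
    rw [← hsum]
    exact Finset.single_le_sum (fun j hj => (hpos j hj).le) hi
  rcases eq_or_ne α 1 with hα1 | hα1
  · subst hα1
    rw [renyiH, if_pos rfl, neg_nonneg]
    apply Finset.sum_nonpos
    intro i hi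
    exact mul_nonpos_of_nonneg_of_nonpos (hpos i hi).le
      (Real.log_nonpos (hpos i hi).le (hle1 i hi))
  · rw [renyiH, if_neg hα1]
    rcases lt_or_gt_of_ne hα1 with hlt | hgt
    · apply mul_nonneg (by rw [inv_nonneg]; linarith)
      apply Real.log_nonneg
      calc (1:ℝ) = ∑ i ∈ Finset.Icc 1 n, P i := hsum.symm
        _ ≤ ∑ i ∈ Finset.Icc 1 n, P i ^ α := by
            apply Finset.sum_le_sum
            intro i hi
            calc P i = P i ^ (1:ℝ) := (Real.rpow_one _).symm
              _ ≤ P i ^ α := Real.rpow_le_rpow_of_exponent_ge (hpos i hi)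
                  (hle1 i hi) hlt.le
    · have h1 : (1 - α)⁻¹ ≤ 0 := by rw [inv_nonpos]; linarith
      have h2 : Real.log (∑ i ∈ Finset.Icc 1 n, P i ^ α) ≤ 0 := by
        apply Real.log_nonpos
        · exact (Finset.sum_pos (fun i hi => Real.rpow_pos_of_pos (hpos i hi) α) hne).le
        · calc ∑ i ∈ Finset.Icc 1 n, P i ^ α
              ≤ ∑ i ∈ Finset.Icc 1 n, P i := by
                apply Finset.sum_le_sum
                intro i hi
                calc P i ^ α ≤ P i ^ (1:ℝ) := Real.rpow_le_rpow_of_exponent_ge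
                      (hpos i hi) (hle1 i hi) hgt.le
                  _ = P i := Real.rpow_one _
            _ = 1 := hsum
      nlinarith [mul_nonneg (neg_nonneg.mpr h1) (neg_nonneg.mpr h2)]

lemma exists_beta_min (n : ℕ) (hn : 2 ≤ n) (ρ : ℝ) (hρ : 1 < ρ)
    (P : ℕ → ℝ) (hP : IsPMF n P) (hR : RatioBdd n ρ P) :
    ∃ β, 1 / (1 + ((n : ℝ) - 1) * ρ) ≤ β ∧ β ≤ 1 / (n : ℝ) ∧
      (∀ i ∈ Finset.Icc 1 n, β ≤ P i) ∧ (∀ i ∈ Finset.Icc 1 n, P i ≤ ρ * β) := by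
  obtain ⟨hpos, hsum⟩ := hP
  have hne : (Finset.Icc 1 n).Nonempty := ⟨1, Finset.mem_Icc.mpr ⟨le_refl 1, by omega⟩⟩
  obtain ⟨j₀, hj₀, hmin⟩ := Finset.exists_min_image (Finset.Icc 1 n) P hne
  refine ⟨P j₀, ?_, ?_, fun i hi => hmin i hi, fun i hi => hR i hi j₀ hj₀⟩
  · -- lower bound
    have hcard : ((Finset.Icc 1 n).card : ℝ) = n := by
      rw [Nat.card_Icc]; push_cast; ring
    have hn' : (2:ℝ) ≤ (n:ℝ) := by exact_mod_cast hn
    have hden : (0:ℝ) < 1 + ((n:ℝ) - 1) * ρ := by nlinarith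
    rw [div_le_iff₀ hden]
    have hcarde : (((Finset.Icc 1 n).erase j₀).card : ℝ) = (n:ℝ) - 1 := by
      rw [Finset.card_erase_of_mem hj₀, Nat.card_Icc, Nat.add_sub_cancel,
        Nat.cast_sub (by omega : 1 ≤ n)]
      push_cast; ring
    have herase : ∑ i ∈ (Finset.Icc 1 n).erase j₀, P i
        ≤ ((n:ℝ) - 1) * (ρ * P j₀) := by
      have h := Finset.sum_le_card_nsmul ((Finset.Icc 1 n).erase j₀) P (ρ * P j₀)
        (fun i hi => hR i (Finset.mem_of_mem_erase hi) j₀ hj₀)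
      rw [nsmul_eq_mul, hcarde] at h
      exact h
    have hsplit : P j₀ + ∑ i ∈ (Finset.Icc 1 n).erase j₀, P i = 1 := by
      rw [Finset.add_sum_erase _ P hj₀, hsum]
    nlinarith [herase, hsplit]
  · -- upper bound
    have hcard : ((Finset.Icc 1 n).card : ℝ) = n := by
      rw [Nat.card_Icc]; push_cast; ring
    have hnpos : (0:ℝ) < (n:ℝ) := by positivity
    rw [le_div_iff₀ hnpos]
    calc P j₀ * n = ∑ i ∈ Finset.Icc 1 n, P j₀ := by
          rw [Finset.sum_const, nsmul_eq_mul, hcard]; ring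
      _ ≤ ∑ i ∈ Finset.Icc 1 n, P i := Finset.sum_le_sum (fun i hi => hmin i hi)
      _ = 1 := hsum

end Aux

theorem stmt1 (n : ℕ) (hn : 2 ≤ n) (ρ α : ℝ) (hρ : 1 < ρ) (hα : 0 < α) :
    (∀ β ∈ Set.Icc (1 / (1 + ((n : ℝ) - 1) * ρ)) (1 / (n : ℝ)),
        IsPMF n (Qbeta n ρ β) ∧ RatioBdd n ρ (Qbeta n ρ β)) ∧
      sInf (renyiH n α '' {P | IsPMF n P ∧ RatioBdd n ρ P}) =
        sInf ((fun β => renyiH n α (Qbeta n ρ β)) ''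
          Set.Icc (1 / (1 + ((n : ℝ) - 1) * ρ)) (1 / (n : ℝ))) := by
  have hpart1 : ∀ β ∈ Set.Icc (1 / (1 + ((n : ℝ) - 1) * ρ)) (1 / (n : ℝ)),
      IsPMF n (Qbeta n ρ β) ∧ RatioBdd n ρ (Qbeta n ρ β) :=
    fun β hβ => Qbeta_isPMF n hn ρ β hρ hβ.1 hβ.2
  refine ⟨hpart1, ?_⟩
  have hn' : (2:ℝ) ≤ (n:ℝ) := by exact_mod_cast hn
  have hnpos : (0:ℝ) < (n:ℝ) := by linarith
  have hlohi : 1 / (1 + ((n : ℝ) - 1) * ρ) ≤ 1 / (n : ℝ) := by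
    apply one_div_le_one_div_of_le hnpos
    nlinarith
  set S := renyiH n α '' {P | IsPMF n P ∧ RatioBdd n ρ P} with hS
  set T := (fun β => renyiH n α (Qbeta n ρ β)) ''
    Set.Icc (1 / (1 + ((n : ℝ) - 1) * ρ)) (1 / (n : ℝ)) with hT
  have hTsubS : T ⊆ S := by
    rintro x ⟨β, hβ, rfl⟩
    exact ⟨Qbeta n ρ β, hpart1 β hβ, rfl⟩
  have hTne : T.Nonempty :=
    ⟨renyiH n α (Qbeta n ρ (1 / (n:ℝ))), ⟨1 / (n:ℝ), ⟨hlohi, le_refl _⟩, rfl⟩⟩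
  have hSne : S.Nonempty := hTne.mono hTsubS
  have hSbdd : BddBelow S := by
    refine ⟨0, ?_⟩
    rintro x ⟨P, hP, rfl⟩
    exact renyi_nonneg n (by omega) α hα P hP.1
  have hTbdd : BddBelow T := hSbdd.mono hTsubS
  apply le_antisymm
  · exact csInf_le_csInf hSbdd hTne hTsubS
  · apply le_csInf hSne
    rintro b ⟨P, ⟨hPpmf, hPratio⟩, rfl⟩
    obtain ⟨β, hβ1, hβ2, hlb, hub⟩ := exists_beta_min n hn ρ hρ P hPpmf hPratio
    have h1 : sInf T ≤ renyiH n α (Qbeta n ρ β) :=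
      csInf_le hTbdd ⟨β, Set.mem_Icc.mpr ⟨hβ1, hβ2⟩, rfl⟩
    have h2 := Qbeta_renyi_le n hn ρ α hρ hα β hβ1 hβ2 P hPpmf.2 hlb hub
    linarith
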